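/- Under the stated setting, the multi-agent system achieves almost sure consensus (Theorem 3): there exists a random variable x* : Ω → ℝ such that for every i ∈ {1,…,N}, x_i(k) → x* almost surely as k → ∞. -/

import Mathlib

open MeasureTheory Filter Matrix


lemma aux_scalar_rec (β ε u : ℕ → ℝ)
    (hβ0 : ∀ k, 0 ≤ β k) (hβ1 : ∀ k, β k ≤ 1)
    (hβdiv : Tendsto (fun n => ∑ k ∈ Finset.range n, β k) atTop atTop)
    (hε0 : ∀ k, 0 ≤ ε k) (hε : Tendsto ε atTop (nhds 0))
    (hu0 : ∀ k, 0 ≤ u k)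
    (hrec : ∀ k, u (k + 1) ≤ (1 - β k) * u k + β k * ε k) :
    Tendsto u atTop (nhds 0) := by
  rw [NormedAddCommGroup.tendsto_atTop]
  intro c hc
  -- get K with ε k ≤ c/3 for k ≥ K
  have hev : ∀ᶠ k in atTop, ε k ≤ c / 3 := by
    have := hε.eventually (eventually_le_nhds (show (0:ℝ) < c/3 by linarith))
    exact this
  obtain ⟨K, hK⟩ := hev.exists_forall_of_atTop
  set d : ℕ → ℝ := fun k => max (u k - c / 3) 0 with hd
  have hd0 : ∀ k, 0 ≤ d k := fun k => le_max_right _ _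
  have hdstep : ∀ k, K ≤ k → d (k + 1) ≤ (1 - β k) * d k := by
    intro k hk
    have h1 : u (k + 1) - c / 3 ≤ (1 - β k) * (u k - c / 3) := by
      have := hrec k
      have hε3 := hK k hk
      have hb0 := hβ0 k
      nlinarith
    have h2 : (1 - β k) * (u k - c / 3) ≤ (1 - β k) * d k := by
      apply mul_le_mul_of_nonneg_left (le_max_left _ _)
      linarith [hβ1 k]
    have h3 : (0:ℝ) ≤ (1 - β k) * d k := by
      apply mul_nonneg _ (hd0 k); linarith [hβ1 k]
    exact max_le (by linarith) h3
  have hdecay : ∀ n : ℕ, d (K + n) ≤ Real.exp (-(∑ j ∈ Finset.range n, β (K + j))) * d K := by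
    intro n
    induction n with
    | zero => simp
    | succ n ih =>
      have hb := hβ0 (K + n)
      have h1mb : 1 - β (K + n) ≤ Real.exp (-(β (K + n))) := by
        have := Real.add_one_le_exp (-(β (K + n))); linarith
      calc d (K + (n + 1)) = d ((K + n) + 1) := by ring_nf
        _ ≤ (1 - β (K + n)) * d (K + n) := hdstep _ (Nat.le_add_right _ _)
        _ ≤ Real.exp (-(β (K + n))) * d (K + n) := by
            apply mul_le_mul_of_nonneg_right h1mb (hd0 _)
        _ ≤ Real.exp (-(β (K + n))) * (Real.exp (-(∑ j ∈ Finset.range n, β (K + j))) * d K) := by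
            apply mul_le_mul_of_nonneg_left ih (Real.exp_nonneg _)
        _ = Real.exp (-(∑ j ∈ Finset.range (n+1), β (K + j))) * d K := by
            rw [Finset.sum_range_succ, neg_add, Real.exp_add]; ring
  -- the exponential bound tends to 0
  have hsum_shift : Tendsto (fun n => ∑ j ∈ Finset.range n, β (K + j)) atTop atTop := by
    have : ∀ n, ∑ j ∈ Finset.range n, β (K + j)
        = (∑ j ∈ Finset.range (K + n), β j) - ∑ j ∈ Finset.range K, β j := by
      intro n
      rw [Finset.sum_range_add]; ring
    simp_rw [this]
    apply Tendsto.atTop_add _ tendsto_const_nhds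
    exact hβdiv.comp (tendsto_add_atTop_nat K |>.comp tendsto_id) |>.congr (fun n => by simp [Nat.add_comm])
  have hexp : Tendsto (fun n => Real.exp (-(∑ j ∈ Finset.range n, β (K + j))) * d K) atTop (nhds 0) := by
    have h1 : Tendsto (fun n => Real.exp (-(∑ j ∈ Finset.range n, β (K + j)))) atTop (nhds 0) :=
      Real.tendsto_exp_atBot.comp (tendsto_neg_atBot_iff.mpr hsum_shift)
    simpa using h1.mul_const (d K)
  have hdtend : Tendsto (fun n => d (K + n)) atTop (nhds 0) :=
    squeeze_zero (fun n => hd0 _) hdecay hexp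
  have hdtend' : Tendsto d atTop (nhds 0) := by
    rw [← tendsto_add_atTop_iff_nat K]
    exact hdtend.congr (fun n => by rw [Nat.add_comm])
  have : ∀ᶠ k in atTop, d k < c / 3 := by
    have := hdtend'.eventually (eventually_lt_nhds (show (0:ℝ) < c/3 by linarith))
    exact this
  obtain ⟨K', hK'⟩ := this.exists_forall_of_atTop
  refine ⟨K', fun n hn => ?_⟩
  have := hK' n hn
  have hun : u n - c/3 ≤ d n := le_max_left _ _
  have : u n < c := by
    have := hd0 n; nlinarith [hK' n hn]
  rw [Real.norm_eq_abs, sub_zero, abs_of_nonneg (hu0 n)]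
  exact this

section DetVec
variable {N : ℕ}

-- abbreviation for the Euclidean embedding
noncomputable def eE {N : ℕ} (u : Fin N → ℝ) : EuclideanSpace ℝ (Fin N) :=
  (WithLp.equiv 2 (Fin N → ℝ)).symm u

lemma eE_apply (u : Fin N → ℝ) (i : Fin N) : eE u i = u i := rfl

lemma eE_normsq (u : Fin N → ℝ) : ‖eE u‖ ^ 2 = ∑ i, u i ^ 2 := by
  rw [EuclideanSpace.norm_eq, Real.sq_sqrt (by positivity)]
  simp [eE_apply, sq_abs]

lemma eE_norm (u : Fin N → ℝ) : ‖eE u‖ = Real.sqrt (∑ i, u i ^ 2) := by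
  rw [← eE_normsq, Real.sqrt_sq (norm_nonneg _)]

lemma eE_inner (a b : Fin N → ℝ) :
    (inner ℝ (eE a) (eE b)) = ∑ i, a i * b i := by
  simp [PiLp.inner_apply, eE_apply, RCLike.inner_apply, conj_trivial]
  exact Finset.sum_congr rfl (fun i _ => mul_comm _ _)

lemma eE_lin (a b : Fin N → ℝ) (r : ℝ) :
    eE (fun i => a i - r * b i) = eE a - r • eE b := by
  ext i
  simp [eE_apply, eE]

lemma coord_le_eE_norm (u : Fin N → ℝ) (i : Fin N) : |u i| ≤ ‖eE u‖ := by
  rw [eE_norm, ← Real.sqrt_sq_eq_abs]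
  exact Real.sqrt_le_sqrt (Finset.single_le_sum (f := fun j => u j ^ 2)
    (fun j _ => sq_nonneg _) (Finset.mem_univ i))

lemma eE_mulVec_le (L : Matrix (Fin N) (Fin N) ℝ) (y : Fin N → ℝ) :
    ‖eE (L.mulVec y)‖ ≤ Real.sqrt (∑ i, ∑ j, L i j ^ 2) * ‖eE y‖ := by
  set C := Real.sqrt (∑ i, ∑ j, L i j ^ 2) with hC
  have hC0 : 0 ≤ C := Real.sqrt_nonneg _
  have hCsq : C ^ 2 = ∑ i, ∑ j, L i j ^ 2 := Real.sq_sqrt (by positivity)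
  have hsq : ‖eE (L.mulVec y)‖ ^ 2 ≤ (C * ‖eE y‖) ^ 2 := by
    rw [eE_normsq, mul_pow, hCsq, eE_normsq]
    have hrow : ∀ i, (L.mulVec y i) ^ 2 ≤ (∑ j, L i j ^ 2) * ∑ j, y j ^ 2 := by
      intro i
      simpa [Matrix.mulVec, dotProduct] using
        Finset.sum_mul_sq_le_sq_mul_sq Finset.univ (fun j => L i j) y
    calc ∑ i, (L.mulVec y i) ^ 2 ≤ ∑ i, (∑ j, L i j ^ 2) * ∑ j, y j ^ 2 :=
          Finset.sum_le_sum fun i _ => hrow i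
      _ = (∑ i, ∑ j, L i j ^ 2) * ∑ j, y j ^ 2 := by rw [Finset.sum_mul]
  calc ‖eE (L.mulVec y)‖ = Real.sqrt (‖eE (L.mulVec y)‖ ^ 2) := (Real.sqrt_sq (norm_nonneg _)).symm
    _ ≤ Real.sqrt ((C * ‖eE y‖) ^ 2) := Real.sqrt_le_sqrt hsq
    _ = C * ‖eE y‖ := Real.sqrt_sq (by positivity)

end DetVec

lemma eE_contract {N : ℕ} (L : Matrix (Fin N) (Fin N) ℝ)
    (lam : ℝ) (hlam : 0 < lam)
    (hgap : ∀ v : Fin N → ℝ, (∑ i, v i) = 0 →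
      lam * (∑ i, (v i) ^ 2) ≤ v ⬝ᵥ L.mulVec v)
    (r : ℝ) (hr : 0 ≤ r)
    (hr1 : r * (Real.sqrt (∑ i, ∑ j, L i j ^ 2)) ^ 2 ≤ lam) (hr2 : r * lam ≤ 1)
    (u : Fin N → ℝ) (hu : ∑ i, u i = 0) :
    ‖eE (fun i => u i - r * L.mulVec u i)‖ ≤ (1 - r * lam / 2) * ‖eE u‖ := by
  set C := Real.sqrt (∑ i, ∑ j, L i j ^ 2) with hC
  have hC0 : 0 ≤ C := Real.sqrt_nonneg _
  have key : ‖eE (fun i => u i - r * L.mulVec u i)‖ ^ 2 ≤ ((1 - r * lam / 2) * ‖eE u‖) ^ 2 := by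
    rw [eE_lin, norm_sub_sq_real, real_inner_smul_right, norm_smul]
    have hinner : lam * ‖eE u‖ ^ 2 ≤ (inner ℝ (eE u) (eE (L.mulVec u))) := by
      rw [eE_inner, eE_normsq]
      simpa [dotProduct] using hgap u hu
    have hLn : ‖eE (L.mulVec u)‖ ≤ C * ‖eE u‖ := eE_mulVec_le L u
    have hLn2 : ‖eE (L.mulVec u)‖ ^ 2 ≤ C ^ 2 * ‖eE u‖ ^ 2 := by
      rw [← mul_pow]; exact pow_le_pow_left₀ (norm_nonneg _) hLn 2
    have habs : ‖r‖ = r := by rw [Real.norm_eq_abs, abs_of_nonneg hr]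
    rw [habs]
    have hnn : (0:ℝ) ≤ ‖eE u‖ ^ 2 := by positivity
    nlinarith [mul_le_mul_of_nonneg_left hinner hr,
      mul_le_mul_of_nonneg_left hLn2 (mul_nonneg hr hr),
      mul_le_mul_of_nonneg_right hr1 (mul_nonneg hr hnn),
      sq_nonneg (r * lam), hnn, mul_nonneg hr hnn, mul_nonneg (mul_nonneg hr hlam.le) hnn]
  have h2 : 0 ≤ (1 - r * lam / 2) := by nlinarith
  calc ‖eE (fun i => u i - r * L.mulVec u i)‖
      = Real.sqrt (‖eE (fun i => u i - r * L.mulVec u i)‖ ^ 2) := (Real.sqrt_sq (norm_nonneg _)).symm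
    _ ≤ Real.sqrt (((1 - r * lam / 2) * ‖eE u‖) ^ 2) := Real.sqrt_le_sqrt key
    _ = (1 - r * lam / 2) * ‖eE u‖ := Real.sqrt_sq (by positivity)

lemma det_consensus {N : ℕ} (hN : 0 < N) (L : Matrix (Fin N) (Fin N) ℝ)
    (hL1 : L.mulVec (fun _ => (1 : ℝ)) = 0)
    (hLsum : ∀ y : Fin N → ℝ, ∑ i, L.mulVec y i = 0)
    (lam : ℝ) (hlam : 0 < lam)
    (hgap : ∀ v : Fin N → ℝ, (∑ i, v i) = 0 →
      lam * (∑ i, (v i) ^ 2) ≤ v ⬝ᵥ L.mulVec v)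
    (α : ℕ → ℝ) (hα_pos : ∀ k, 0 < α k)
    (hα_div : Tendsto (fun n => ∑ k ∈ Finset.range n, α k) atTop atTop)
    (hα0 : Tendsto α atTop (nhds 0))
    (X W : ℕ → Fin N → ℝ)
    (hrec : ∀ k i, X (k + 1) i = X k i - α k * L.mulVec (X k) i + α k * W k i)
    (t : ℝ)
    (ht : Tendsto (fun n => ∑ j ∈ Finset.range n, α j * ((∑ i, W j i) / N)) atTop (nhds t))
    (s : Fin N → ℝ)
    (hS : ∀ i, Tendsto (fun n => ∑ j ∈ Finset.range n, α j * (W j i - (∑ l, W j l) / N))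
      atTop (nhds (s i))) :
    ∀ i, Tendsto (fun k => X k i) atTop (nhds ((∑ i, X 0 i) / N + t)) := by
  have hNR : (0 : ℝ) < N := by exact_mod_cast hN
  set m : ℕ → ℝ := fun k => (∑ i, X k i) / N with hm
  set mW : ℕ → ℝ := fun j => (∑ i, W j i) / N with hmW
  -- row sums of L are zero
  have hLrow : ∀ i, ∑ j, L i j = 0 := by
    intro i
    have := congrFun hL1 i
    simpa [Matrix.mulVec, dotProduct] using this
  -- mean recursion
  have hm_step : ∀ k, m (k + 1) = m k + α k * mW k := by
    intro k
    have : ∑ i, X (k + 1) i = ∑ i, X k i + α k * ∑ i, W k i := by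
      simp only [hrec]
      rw [Finset.sum_add_distrib, Finset.sum_sub_distrib, ← Finset.mul_sum, ← Finset.mul_sum,
        hLsum (X k)]
      ring
    simp only [hm, hmW, this]
    field_simp
  have hm_eq : ∀ k, m k = m 0 + ∑ j ∈ Finset.range k, α j * mW j := by
    intro k
    induction k with
    | zero => simp
    | succ k ih => rw [hm_step, ih, Finset.sum_range_succ]; ring
  have hm_tend : Tendsto m atTop (nhds (m 0 + t)) := by
    have := (tendsto_const_nhds (x := m 0) (f := atTop)).add ht
    exact this.congr (fun k => (hm_eq k).symm)
  -- the centered noise sums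
  set S : ℕ → Fin N → ℝ := fun k i => ∑ j ∈ Finset.range k, α j * (W j i - mW j) with hSdef
  have hS' : ∀ i, Tendsto (fun k => S k i) atTop (nhds (s i)) := hS
  -- deviation and shifted deviation
  set v : ℕ → Fin N → ℝ := fun k i => X k i - m k with hvdef
  set z : ℕ → Fin N → ℝ := fun k i => v k i - (S k i - s i) with hzdef
  have hv_sum : ∀ k, ∑ i, v k i = 0 := by
    intro k
    simp only [hvdef]
    rw [Finset.sum_sub_distrib, Finset.sum_const, Finset.card_univ, Fintype.card_fin]
    simp only [hm, nsmul_eq_mul]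
    field_simp
    ring
  have hS_sum : ∀ k, ∑ i, S k i = 0 := by
    intro k
    simp only [hSdef]
    rw [Finset.sum_comm]
    apply Finset.sum_eq_zero
    intro j _
    rw [← Finset.mul_sum, Finset.sum_sub_distrib, Finset.sum_const, Finset.card_univ,
      Fintype.card_fin]
    simp only [hmW, nsmul_eq_mul]
    field_simp
    ring
  have hs_sum : ∑ i, s i = 0 := by
    have h1 : Tendsto (fun k => ∑ i, S k i) atTop (nhds (∑ i, s i)) :=
      tendsto_finset_sum _ (fun i _ => hS' i)
    have h2 : Tendsto (fun k => ∑ i, S k i) atTop (nhds 0) := by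
      simpa [hS_sum] using tendsto_const_nhds (x := (0:ℝ)) (f := atTop)
    exact tendsto_nhds_unique h1 h2
  have hz_sum : ∀ k, ∑ i, z k i = 0 := by
    intro k
    have hterm : ∀ i, z k i = X k i - m k - S k i + s i := by
      intro i; simp only [hzdef, hvdef]; ring
    rw [Finset.sum_congr rfl (fun i _ => hterm i), Finset.sum_add_distrib,
      Finset.sum_sub_distrib, Finset.sum_sub_distrib, hS_sum, hs_sum, Finset.sum_const,
      Finset.card_univ, Fintype.card_fin]
    simp only [hm, nsmul_eq_mul]
    field_simp
    ring
  -- z recursion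
  have hz_rec : ∀ k i, z (k + 1) i =
      z k i - α k * L.mulVec (z k) i - α k * L.mulVec (fun l => S k l - s l) i := by
    intro k i
    have hLX : L.mulVec (X k) i
        = L.mulVec (z k) i + L.mulVec (fun l => S k l - s l) i := by
      simp only [Matrix.mulVec, dotProduct]
      have h1 : ∀ j, L i j * X k j
          = L i j * z k j + L i j * (S k j - s j) + L i j * m k := by
        intro j; simp only [hzdef, hvdef]; ring
      rw [Finset.sum_congr rfl (fun j _ => h1 j), Finset.sum_add_distrib,
        Finset.sum_add_distrib, ← Finset.sum_mul, hLrow i]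
      ring
    have hSstep : S (k + 1) i = S k i + α k * (W k i - mW k) := by
      simp only [hSdef]; rw [Finset.sum_range_succ]
    have hzz : z k i = X k i - m k - (S k i - s i) := rfl
    have hv1 : z (k + 1) i = X (k + 1) i - m (k + 1) - (S (k + 1) i - s i) := rfl
    rw [hv1, hrec, hm_step, hSstep]
    linear_combination hzz - α k * hLX
  -- norm bound constant
  set C := Real.sqrt (∑ i, ∑ j, L i j ^ 2) with hC
  have hC0 : 0 ≤ C := Real.sqrt_nonneg _
  -- eventually small step sizes
  have hev1 : ∀ᶠ k in atTop, α k * C ^ 2 ≤ lam :=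
    (hα0.mul_const (C ^ 2)).eventually (eventually_le_nhds (by simpa using hlam))
  have hev2 : ∀ᶠ k in atTop, α k * lam ≤ 1 :=
    (hα0.mul_const lam).eventually (eventually_le_nhds (by norm_num))
  obtain ⟨K, hK⟩ := (hev1.and hev2).exists_forall_of_atTop
  -- convergence of ‖e (S k - s)‖ to 0
  have hSnorm : Tendsto (fun k => ‖eE (fun i => S k i - s i)‖) atTop (nhds 0) := by
    have h1 : Tendsto (fun k => ∑ i, (S k i - s i) ^ 2) atTop (nhds 0) := by
      have := tendsto_finset_sum (Finset.univ : Finset (Fin N))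
        (fun i _ => (((hS' i).sub_const (s i)).pow 2))
      simpa using this
    have h2 : Tendsto (fun k => Real.sqrt (∑ i, (S k i - s i) ^ 2)) atTop (nhds 0) := by
      have := (Real.continuous_sqrt.tendsto 0).comp h1
      simpa [Function.comp_def] using this
    exact h2.congr (fun k => (eE_norm _).symm)
  -- apply scalar lemma to shifted sequences
  have hmain : Tendsto (fun n => ‖eE (z (n + K))‖) atTop (nhds 0) := by
    apply aux_scalar_rec (fun n => α (n + K) * lam / 2)
      (fun n => (2 * C / lam) * ‖eE (fun i => S (n + K) i - s i)‖)
      (fun n => ‖eE (z (n + K))‖)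
    · intro k
      have h := (hα_pos (k + K)).le
      positivity
    · intro k
      have := (hK (k + K) (Nat.le_add_left _ _)).2
      linarith
    · -- divergence of shifted sums
      have heq : ∀ n, ∑ k ∈ Finset.range n, α (k + K) * lam / 2
          = (lam / 2) * ((∑ k ∈ Finset.range (K + n), α k) - ∑ k ∈ Finset.range K, α k) := by
        intro n
        have hterm : ∀ k, α (k + K) * lam / 2 = (lam / 2) * α (K + k) := by
          intro k; rw [Nat.add_comm k K]; ring
        rw [Finset.sum_congr rfl (fun k _ => hterm k), ← Finset.mul_sum, Finset.sum_range_add]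
        ring
      have h2 : Tendsto (fun n => ∑ k ∈ Finset.range (K + n), α k) atTop atTop := by
        have h3 := hα_div.comp (tendsto_add_atTop_nat K)
        exact h3.congr (fun n => by simp [Nat.add_comm])
      have h4 := h2.atTop_add (tendsto_const_nhds (x := -(∑ k ∈ Finset.range K, α k))
        (f := atTop))
      have h5 : Tendsto (fun n => (∑ k ∈ Finset.range (K + n), α k)
          - ∑ k ∈ Finset.range K, α k) atTop atTop :=
        h4.congr (fun n => by ring)
      have h6 := h5.const_mul_atTop (half_pos hlam)
      exact h6.congr (fun n => (heq n).symm)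
    · intro k; positivity
    · have h1 := hSnorm.comp (tendsto_add_atTop_nat K)
      have h2 := h1.const_mul (2 * C / lam)
      simp only [Function.comp] at h2
      simpa using h2
    · intro k; exact norm_nonneg _
    · intro n
      -- the recursion inequality
      have hidx : n + 1 + K = n + K + 1 := by omega
      show ‖eE (z (n + 1 + K))‖ ≤ _
      rw [hidx]
      have hk := hK (n + K) (Nat.le_add_left _ _)
      have hzsplit : (fun i => z ((n + K) + 1) i)
          = fun i => (z (n + K) i - α (n + K) * L.mulVec (z (n + K)) i)
              - α (n + K) * L.mulVec (fun l => S (n + K) l - s l) i := by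
        funext i; rw [hz_rec]
      have hnorm : ‖eE (z ((n + K) + 1))‖
          ≤ ‖eE (fun i => z (n + K) i - α (n + K) * L.mulVec (z (n + K)) i)‖
            + α (n + K) * ‖eE (L.mulVec (fun l => S (n + K) l - s l))‖ := by
        have : eE (z ((n + K) + 1))
            = eE (fun i => z (n + K) i - α (n + K) * L.mulVec (z (n + K)) i)
              - α (n + K) • eE (L.mulVec (fun l => S (n + K) l - s l)) := by
          rw [congrArg eE hzsplit, eE_lin]
        rw [this]
        refine (norm_sub_le _ _).trans ?_
        rw [norm_smul, Real.norm_eq_abs, abs_of_nonneg (hα_pos _).le]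
      have hcon : ‖eE (fun i => z (n + K) i - α (n + K) * L.mulVec (z (n + K)) i)‖
          ≤ (1 - α (n + K) * lam / 2) * ‖eE (z (n + K))‖ :=
        eE_contract L lam hlam hgap (α (n + K)) (hα_pos _).le hk.1 hk.2 (z (n + K))
          (hz_sum _)
      have hforce : α (n + K) * ‖eE (L.mulVec (fun l => S (n + K) l - s l))‖
          ≤ (α (n + K) * lam / 2) * ((2 * C / lam) * ‖eE (fun i => S (n + K) i - s i)‖) := by
        have := eE_mulVec_le L (fun l => S (n + K) l - s l)
        have hα := (hα_pos (n + K)).le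
        calc α (n + K) * ‖eE (L.mulVec (fun l => S (n + K) l - s l))‖
            ≤ α (n + K) * (C * ‖eE (fun i => S (n + K) i - s i)‖) :=
              mul_le_mul_of_nonneg_left this hα
          _ = (α (n + K) * lam / 2) * ((2 * C / lam) * ‖eE (fun i => S (n + K) i - s i)‖) := by
              field_simp
      calc ‖eE (z ((n + K) + 1))‖
          ≤ ‖eE (fun i => z (n + K) i - α (n + K) * L.mulVec (z (n + K)) i)‖
            + α (n + K) * ‖eE (L.mulVec (fun l => S (n + K) l - s l))‖ := hnorm
        _ ≤ (1 - α (n + K) * lam / 2) * ‖eE (z (n + K))‖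
            + (α (n + K) * lam / 2) * ((2 * C / lam) * ‖eE (fun i => S (n + K) i - s i)‖) :=
            add_le_add hcon hforce
  -- unshift
  have hz_tend : Tendsto (fun k => ‖eE (z k)‖) atTop (nhds 0) := by
    rw [← tendsto_add_atTop_iff_nat K]
    exact hmain
  -- per coordinate
  intro i
  have hzi : Tendsto (fun k => z k i) atTop (nhds 0) :=
    squeeze_zero_norm (fun k => coord_le_eE_norm (z k) i) hz_tend
  have hSi : Tendsto (fun k => S k i - s i) atTop (nhds 0) := by
    simpa using (hS' i).sub_const (s i)
  have hX_eq : ∀ k, X k i = z k i + (S k i - s i) + m k := by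
    intro k; simp only [hzdef, hvdef]; ring
  have := (hzi.add hSi).add hm_tend
  simp only [add_zero, zero_add] at this
  exact this.congr (fun k => (hX_eq k).symm)


open scoped ENNReal NNReal

lemma memL2_mul_integrable {Ω : Type*} {mΩ : MeasurableSpace Ω} {μ : Measure Ω}
    {f g : Ω → ℝ} (hf : MemLp f 2 μ) (hg : MemLp g 2 μ) :
    Integrable (fun ω => f ω * g ω) μ := by
  have hint : Integrable (fun ω => f ω ^ 2 + g ω ^ 2) μ :=
    hf.integrable_sq.add hg.integrable_sq
  refine hint.mono' (hf.aestronglyMeasurable.mul hg.aestronglyMeasurable) ?_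
  filter_upwards with ω
  rw [Real.norm_eq_abs, abs_mul]
  nlinarith [abs_nonneg (f ω), abs_nonneg (g ω), sq_abs (f ω), sq_abs (g ω),
    sq_nonneg (|f ω| - |g ω|)]

lemma noise_series_conv {N : ℕ} {Ω : Type*} {mΩ : MeasurableSpace Ω} (μ : Measure Ω)
    [IsProbabilityMeasure μ] (ℱ : Filtration ℕ mΩ)
    (α : ℕ → ℝ) (hα_sq : Summable (fun k => (α k) ^ 2))
    (M : ℝ)
    (w : ℕ → Ω → Fin N → ℝ)
    (hw_meas : ∀ k, Measurable[ℱ (k + 1)] (w k))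
    (hw_L2 : ∀ k, MemLp (w k) 2 μ)
    (hw_cond : ∀ k i, μ[(fun ω => w k ω i) | ℱ k] =ᵐ[μ] 0)
    (hw_bound : ∀ k, ∫ ω, (∑ i, (w k ω i) ^ 2) ∂μ ≤ M)
    (c : Fin N → ℝ) :
    ∃ g : Ω → ℝ, Measurable g ∧
      ∀ᵐ ω ∂μ, Tendsto (fun n => ∑ j ∈ Finset.range n, α j * ∑ i, c i * w j ω i)
        atTop (nhds (g ω)) := by
  classical
  -- coordinates are in L²
  have hcoord : ∀ k i, MemLp (fun ω => w k ω i) 2 μ := by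
    intro k i
    exact (ContinuousLinearMap.proj (R := ℝ) (φ := fun _ : Fin N => ℝ) i).comp_memLp' (hw_L2 k)
  set Y : ℕ → Ω → ℝ := fun k ω => ∑ i, c i * w k ω i with hYdef
  have hYmem : ∀ k, MemLp (Y k) 2 μ := by
    intro k
    have heq : Y k = ∑ i : Fin N, (fun ω => c i * w k ω i) := by
      funext ω; rw [Finset.sum_apply]
    rw [heq]
    exact memLp_finset_sum' _ (fun i _ => ((hcoord k i).const_mul (c i)))

  have hYint : ∀ k, Integrable (Y k) μ := fun k => (hYmem k).integrable one_le_two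
  have hYmeas : ∀ k, Measurable[ℱ (k + 1)] (Y k) := by
    intro k
    apply Finset.measurable_sum
    intro i _
    exact ((measurable_pi_apply i).comp (hw_meas k)).const_mul (c i)
  have hYcond : ∀ k, μ[Y k | ℱ k] =ᵐ[μ] 0 := by
    intro k
    have hfun : Y k = ∑ i : Fin N, (fun ω => c i * w k ω i) := by
      funext ω; rw [Finset.sum_apply]
    have h1 : μ[Y k | ℱ k] =ᵐ[μ] ∑ i : Fin N, μ[(fun ω => c i * w k ω i) | ℱ k] := by
      rw [hfun]
      exact condExp_finset_sum (fun i _ => ((hcoord k i).integrable one_le_two).const_mul (c i)) (ℱ k)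
    have h2 : ∀ i : Fin N, μ[(fun ω => c i * w k ω i) | ℱ k] =ᵐ[μ] 0 := by
      intro i
      have := condExp_smul (μ := μ) (m := ℱ k) (c i) (fun ω => w k ω i)
      refine this.trans ?_
      filter_upwards [hw_cond k i] with ω hω
      simp [hω]
    refine h1.trans ?_
    have : ∀ᵐ ω ∂μ, ∀ i : Fin N, (μ[(fun ω' => c i * w k ω' i) | ℱ k]) ω = 0 := by
      rw [ae_all_iff]; intro i; exact h2 i
    filter_upwards [this] with ω hω
    simp only [Finset.sum_apply, Pi.zero_apply]
    exact Finset.sum_eq_zero fun i _ => hω i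
  -- the martingale of partial sums
  set f : ℕ → Ω → ℝ := fun n ω => ∑ j ∈ Finset.range n, α j * Y j ω with hfdef
  have hfmem : ∀ n, MemLp (f n) 2 μ := by
    intro n
    have heq : f n = ∑ j ∈ Finset.range n, (fun ω => α j * Y j ω) := by
      funext ω; rw [Finset.sum_apply]
    rw [heq]
    exact memLp_finset_sum' _ (fun j _ => ((hYmem j).const_mul (α j)))
  have hfint : ∀ n, Integrable (f n) μ := fun n => (hfmem n).integrable one_le_two
  have hadp : StronglyAdapted ℱ f := by
    intro n
    apply Measurable.stronglyMeasurable
    apply Finset.measurable_sum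
    intro j hj
    have hjn : j + 1 ≤ n := Finset.mem_range.mp hj
    exact (((hYmeas j).mono (ℱ.mono hjn) le_rfl)).const_mul (α j)
  have hfsucc : ∀ n, f (n + 1) = f n + α n • Y n := by
    intro n; funext ω
    simp only [hfdef, Finset.sum_range_succ, Pi.add_apply, Pi.smul_apply, smul_eq_mul]
  have hmart : Martingale f ℱ μ := by
    apply martingale_nat hadp hfint
    intro n
    have h1 : μ[f (n + 1) | ℱ n] =ᵐ[μ] μ[f n | ℱ n] + μ[α n • Y n | ℱ n] := by
      rw [hfsucc n]
      exact condExp_add (hfint n) ((hYint n).smul (α n)) (ℱ n)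
    have h2 : μ[f n | ℱ n] = f n :=
      condExp_of_stronglyMeasurable (ℱ.le n) (hadp n) (hfint n)
    have h3 : μ[α n • Y n | ℱ n] =ᵐ[μ] 0 := by
      refine (condExp_smul (α n) (Y n) (ℱ n)).trans ?_
      filter_upwards [hYcond n] with ω hω
      simp only [Pi.smul_apply, smul_eq_mul, Pi.zero_apply] at hω ⊢
      rw [hω]; ring
    symm
    refine h1.trans ?_
    rw [h2]
    filter_upwards [h3] with ω hω
    simp [hω]
  -- M is nonnegative
  have hM0 : 0 ≤ M :=
    le_trans (integral_nonneg (fun ω => Finset.sum_nonneg fun i _ => sq_nonneg _)) (hw_bound 0)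
  have hc0 : 0 ≤ ∑ i, c i ^ 2 := Finset.sum_nonneg fun i _ => sq_nonneg _
  -- second moment of Y
  have hwsq_int : ∀ k, Integrable (fun ω => ∑ i, (w k ω i) ^ 2) μ := by
    intro k
    exact integrable_finset_sum Finset.univ (fun i _ => (hcoord k i).integrable_sq)
  have hvar : ∀ k, ∫ ω, (Y k ω) ^ 2 ∂μ ≤ (∑ i, c i ^ 2) * M := by
    intro k
    have hpt : ∀ ω, (Y k ω) ^ 2 ≤ (∑ i, c i ^ 2) * ∑ i, (w k ω i) ^ 2 := by
      intro ω
      exact Finset.sum_mul_sq_le_sq_mul_sq Finset.univ c (fun i => w k ω i)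
    calc ∫ ω, (Y k ω) ^ 2 ∂μ
        ≤ ∫ ω, (∑ i, c i ^ 2) * ∑ i, (w k ω i) ^ 2 ∂μ :=
          integral_mono (hYmem k).integrable_sq ((hwsq_int k).const_mul _) hpt
      _ = (∑ i, c i ^ 2) * ∫ ω, ∑ i, (w k ω i) ^ 2 ∂μ := integral_const_mul _ _
      _ ≤ (∑ i, c i ^ 2) * M := mul_le_mul_of_nonneg_left (hw_bound k) hc0
  -- orthogonality of increments
  have horth : ∀ n, ∫ ω, f n ω * Y n ω ∂μ = 0 := by
    intro n
    have hprod_int : Integrable (fun ω => f n ω * Y n ω) μ :=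
      memL2_mul_integrable (hfmem n) (hYmem n)
    have hpull : μ[(f n * Y n) | ℱ n] =ᵐ[μ] f n * μ[Y n | ℱ n] :=
      condExp_mul_of_stronglyMeasurable_left (hadp n) hprod_int (hYint n)
    have hzero : μ[(f n * Y n) | ℱ n] =ᵐ[μ] 0 := by
      refine hpull.trans ?_
      filter_upwards [hYcond n] with ω hω
      simp only [Pi.mul_apply, Pi.zero_apply] at hω ⊢
      rw [hω]; ring
    have h1 := integral_condExp (μ := μ) (f := f n * Y n) (ℱ.le n)
    calc ∫ ω, f n ω * Y n ω ∂μ = ∫ ω, (μ[(f n * Y n) | ℱ n]) ω ∂μ := h1.symm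
      _ = ∫ ω, (0 : Ω → ℝ) ω ∂μ := integral_congr_ae hzero
      _ = 0 := by simp
  -- second moment bound of f
  have hT : ∀ n, ∑ j ∈ Finset.range n, α j ^ 2 ≤ ∑' j, α j ^ 2 :=
    fun n => hα_sq.sum_le_tsum _ (fun j _ => sq_nonneg _)
  set B : ℝ := (∑' j, α j ^ 2) * ((∑ i, c i ^ 2) * M) with hB
  have hsq : ∀ n, ∫ ω, (f n ω) ^ 2 ∂μ ≤ (∑ j ∈ Finset.range n, α j ^ 2) * ((∑ i, c i ^ 2) * M) := by
    intro n
    induction n with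
    | zero => simp [hfdef]
    | succ n ih =>
      have hptw : ∀ ω, (f (n + 1) ω) ^ 2
          = (f n ω) ^ 2 + (2 * α n) * (f n ω * Y n ω) + α n ^ 2 * (Y n ω) ^ 2 := by
        intro ω
        have : f (n + 1) ω = f n ω + α n * Y n ω := by
          rw [hfsucc n]; simp
        rw [this]; ring
      have hint1 : Integrable (fun ω => (f n ω) ^ 2) μ := (hfmem n).integrable_sq
      have hint2 : Integrable (fun ω => (2 * α n) * (f n ω * Y n ω)) μ :=
        (memL2_mul_integrable (hfmem n) (hYmem n)).const_mul _
      have hint3 : Integrable (fun ω => α n ^ 2 * (Y n ω) ^ 2) μ :=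
        ((hYmem n).integrable_sq).const_mul _
      have hsplit : ∫ ω, (f (n + 1) ω) ^ 2 ∂μ
          = ∫ ω, (f n ω) ^ 2 ∂μ + (2 * α n) * ∫ ω, f n ω * Y n ω ∂μ
            + α n ^ 2 * ∫ ω, (Y n ω) ^ 2 ∂μ := by
        calc ∫ ω, (f (n + 1) ω) ^ 2 ∂μ
            = ∫ ω, ((f n ω) ^ 2 + (2 * α n) * (f n ω * Y n ω)
                + α n ^ 2 * (Y n ω) ^ 2) ∂μ :=
              integral_congr_ae (Filter.Eventually.of_forall hptw)
          _ = (∫ ω, ((f n ω) ^ 2 + (2 * α n) * (f n ω * Y n ω)) ∂μ)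
                + ∫ ω, α n ^ 2 * (Y n ω) ^ 2 ∂μ := integral_add (hint1.add hint2) hint3
          _ = (∫ ω, (f n ω) ^ 2 ∂μ) + (∫ ω, (2 * α n) * (f n ω * Y n ω) ∂μ)
                + ∫ ω, α n ^ 2 * (Y n ω) ^ 2 ∂μ := by rw [integral_add hint1 hint2]
          _ = ∫ ω, (f n ω) ^ 2 ∂μ + (2 * α n) * ∫ ω, f n ω * Y n ω ∂μ
                + α n ^ 2 * ∫ ω, (Y n ω) ^ 2 ∂μ := by rw [integral_const_mul, integral_const_mul]
      rw [hsplit, horth n]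
      have h2 : α n ^ 2 * ∫ ω, (Y n ω) ^ 2 ∂μ ≤ α n ^ 2 * ((∑ i, c i ^ 2) * M) :=
        mul_le_mul_of_nonneg_left (hvar n) (sq_nonneg _)
      rw [Finset.sum_range_succ]
      nlinarith [ih]
  have hfsq_B : ∀ n, ∫ ω, (f n ω) ^ 2 ∂μ ≤ B := by
    intro n
    refine (hsq n).trans ?_
    exact mul_le_mul_of_nonneg_right (hT n) (by positivity)
  -- L¹ boundedness
  have habs : ∀ n, ∫ ω, ‖f n ω‖ ∂μ ≤ B + 1 := by
    intro n
    have hpt : ∀ ω, ‖f n ω‖ ≤ (f n ω) ^ 2 + 1 := by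
      intro ω
      rw [Real.norm_eq_abs]
      nlinarith [sq_abs (f n ω), abs_nonneg (f n ω), sq_nonneg (|f n ω| - 1)]
    calc ∫ ω, ‖f n ω‖ ∂μ ≤ ∫ ω, ((f n ω) ^ 2 + 1) ∂μ :=
          integral_mono (hfint n).norm ((hfmem n).integrable_sq.add (integrable_const 1)) hpt
      _ = (∫ ω, (f n ω) ^ 2 ∂μ) + 1 := by
          rw [integral_add (hfmem n).integrable_sq (integrable_const 1)]
          simp
      _ ≤ B + 1 := by linarith [hfsq_B n]
  have hbdd : ∀ n, eLpNorm (f n) 1 μ ≤ ((B + 1).toNNReal : ℝ≥0∞) := by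
    intro n
    rw [eLpNorm_one_eq_lintegral_enorm,
      ← ofReal_integral_norm_eq_lintegral_enorm (hfint n)]
    exact ENNReal.ofReal_le_ofReal (habs n)
  -- martingale convergence
  have hconv := hmart.submartingale.ae_tendsto_limitProcess hbdd
  refine ⟨ℱ.limitProcess f μ, ?_, ?_⟩
  · exact (Filtration.stronglyMeasurable_limit_process' (f := f) (ℱ := ℱ) (μ := μ)).measurable
  · filter_upwards [hconv] with ω hω
    exact hω

/-- Theorem 3 (almost sure consensus): there is a random variable `x*` such that
every agent's state converges to `x*` almost surely. -/
theorem almost_sure_consensus {N : ℕ} (hN : 2 ≤ N)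
    {Ω : Type*} {mΩ : MeasurableSpace Ω} (μ : MeasureTheory.Measure Ω) [MeasureTheory.IsProbabilityMeasure μ]
    (ℱ : MeasureTheory.Filtration ℕ mΩ)
    (L : Matrix (Fin N) (Fin N) ℝ) (hLsymm : L.IsSymm)
    (hL1 : L.mulVec (fun _ => (1 : ℝ)) = 0)
    (lam : ℝ) (hlam : 0 < lam)
    (hgap : ∀ v : Fin N → ℝ, (∑ i, v i) = 0 →
      lam * (∑ i, (v i) ^ 2) ≤ v ⬝ᵥ L.mulVec v)
    (α : ℕ → ℝ) (hα_pos : ∀ k, 0 < α k)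
    (hdiag : ∀ (i : Fin N) (k : ℕ), 0 < 1 - α k * L i i)
    (hα_div : Filter.Tendsto (fun n => ∑ k ∈ Finset.range n, α k) Filter.atTop Filter.atTop)
    (hα_sq : Summable (fun k => (α k) ^ 2))
    (M : ℝ) (hM : 0 ≤ M)
    (w : ℕ → Ω → Fin N → ℝ)
    (hw_meas : ∀ k, Measurable[ℱ (k + 1)] (w k))
    (hw_L2 : ∀ k, MeasureTheory.MemLp (w k) 2 μ)
    (hw_cond : ∀ k i, μ[(fun ω => w k ω i) | ℱ k] =ᵐ[μ] 0)
    (hw_bound : ∀ k, ∫ ω, (∑ i, (w k ω i) ^ 2) ∂μ ≤ M)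
    (x : ℕ → Ω → Fin N → ℝ) (ξ : Fin N → ℝ) (hx0 : ∀ ω, x 0 ω = ξ)
    (hx_meas : ∀ k, Measurable[ℱ k] (x k))
    (hrec : ∀ k ω, x (k + 1) ω =
      ((1 : Matrix (Fin N) (Fin N) ℝ) - α k • L).mulVec (x k ω) + α k • w k ω) :
    ∃ xstar : Ω → ℝ, Measurable xstar ∧
      ∀ i : Fin N, ∀ᵐ ω ∂μ,
        Tendsto (fun k => x k ω i) atTop (nhds (xstar ω)) := by
  classical
  have hN0 : 0 < N := by omega
  have hNR : (0 : ℝ) < N := by exact_mod_cast hN0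
  -- step sizes tend to zero
  have hα0 : Tendsto α atTop (nhds 0) := by
    have h1 := hα_sq.tendsto_atTop_zero
    have h2 := (Real.continuous_sqrt.tendsto 0).comp h1
    simp only [Function.comp, Real.sqrt_zero] at h2
    exact h2.congr (fun k => Real.sqrt_sq (hα_pos k).le)
  -- column sums of L vanish
  have hLrow : ∀ i, ∑ j, L i j = 0 := by
    intro i
    simpa [Matrix.mulVec, dotProduct] using congrFun hL1 i
  have hLsum : ∀ y : Fin N → ℝ, ∑ i, L.mulVec y i = 0 := by
    intro y
    simp only [Matrix.mulVec, dotProduct]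
    rw [Finset.sum_comm]
    apply Finset.sum_eq_zero
    intro j _
    have h1 : ∑ i, L i j * y j = (∑ i, L j i) * y j := by
      rw [Finset.sum_mul]
      apply Finset.sum_congr rfl
      intro i _
      rw [hLsymm.apply i j]
    rw [h1, hLrow j, zero_mul]
  -- coordinate form of the recursion
  have hrec' : ∀ k ω i, x (k + 1) ω i
      = x k ω i - α k * L.mulVec (x k ω) i + α k * w k ω i := by
    intro k ω i
    have h := congrFun (hrec k ω) i
    rw [Matrix.sub_mulVec, Matrix.one_mulVec, Matrix.smul_mulVec] at h
    simpa using h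
  -- a.s. convergence of the mean noise series
  obtain ⟨g0, hg0meas, hg0⟩ := noise_series_conv μ ℱ α hα_sq M w hw_meas hw_L2 hw_cond hw_bound
    (fun _ => (1 : ℝ) / N)
  -- a.s. convergence of the centered noise series, coordinatewise
  have hco := fun i : Fin N => noise_series_conv μ ℱ α hα_sq M w hw_meas hw_L2 hw_cond hw_bound
    (fun l => (if l = i then (1 : ℝ) else 0) - 1 / N)
  choose g hgmeas hgtend using hco
  -- the limit random variable
  refine ⟨fun ω => (∑ i, ξ i) / N + g0 ω, (hg0meas.const_add _), ?_⟩
  intro i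
  have hall : ∀ᵐ ω ∂μ, ∀ i : Fin N,
      Tendsto (fun n => ∑ j ∈ Finset.range n, α j *
        ∑ l, ((if l = i then (1 : ℝ) else 0) - 1 / N) * w j ω l) atTop (nhds (g i ω)) := by
    rw [ae_all_iff]; exact hgtend
  filter_upwards [hg0, hall] with ω h0 hS
  -- identify the series forms
  have hsum_mean : ∀ j, (∑ l, (1 : ℝ) / N * w j ω l) = (∑ l, w j ω l) / N := by
    intro j
    rw [← Finset.mul_sum]
    ring
  have hsum_cent : ∀ (i' : Fin N) j,
      (∑ l, ((if l = i' then (1 : ℝ) else 0) - 1 / N) * w j ω l)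
        = w j ω i' - (∑ l, w j ω l) / N := by
    intro i' j
    have : ∀ l, ((if l = i' then (1 : ℝ) else 0) - 1 / N) * w j ω l
        = (if l = i' then w j ω l else 0) - 1 / N * w j ω l := by
      intro l
      by_cases h : l = i' <;> simp [h] <;> ring
    rw [Finset.sum_congr rfl (fun l _ => this l), Finset.sum_sub_distrib,
      Finset.sum_ite_eq' Finset.univ i' (fun l => w j ω l), ← Finset.mul_sum]
    simp
    ring
  have ht : Tendsto (fun n => ∑ j ∈ Finset.range n, α j * ((∑ l, w j ω l) / N))
      atTop (nhds (g0 ω)) := by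
    refine h0.congr (fun n => ?_)
    exact Finset.sum_congr rfl (fun j _ => by rw [hsum_mean j])
  have hScent : ∀ i' : Fin N, Tendsto (fun n => ∑ j ∈ Finset.range n,
      α j * (w j ω i' - (∑ l, w j ω l) / N)) atTop (nhds (g i' ω)) := by
    intro i'
    refine (hS i').congr (fun n => ?_)
    exact Finset.sum_congr rfl (fun j _ => by rw [hsum_cent i' j])
  have hdet := det_consensus hN0 L hL1 hLsum lam hlam hgap α hα_pos hα_div hα0
    (fun k => x k ω) (fun k => w k ω) (fun k i' => hrec' k ω i') (g0 ω) ht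
    (fun i' => g i' ω) hScent
  have := hdet i
  simp only [hx0] at this
  exact this
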